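/- Let λ₁, λ₂ > 0, β₁ ≥ 0, β₂ > 0 and α₂ ≥ 0. Then there exists N > 1 such that for every real x ≥ N the following three inequalities hold: (i) λ₁·(g(x+1,0) − g(x,0)) + λ₂·(g(x,1) − g(x,0)) ≤ 0; (ii) λ₁·(g(x+1,1) − g(x,1)) + β₁·(g(x−1,1) − g(x,1)) + (λ₂ + α₂)·(g(x,2) − g(x,1)) + β₂x·(g(x,0) − g(x,1)) ≤ 0; (iii) λ₁·(g(x+1,2) − g(x,2)) + 2β₁·(g(x−1,2) − g(x,2)) + (λ₂ + 2α₂)·(g(x,3) − g(x,2)) + β₂x·(g(x,1) − g(x,2)) ≤ 0. -/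

import Mathlib

open Real Filter


lemma master18 (c d : ℝ) (hd : 0 < d) :
    ∀ᶠ x : ℝ in atTop, c * Real.log x ^ 3 ≤ d * x := by
  rcases le_or_gt c 0 with hc | hc
  · filter_upwards [eventually_ge_atTop (1:ℝ)] with x hx
    have h1 : 0 ≤ Real.log x := Real.log_nonneg hx
    nlinarith [pow_nonneg h1 3]
  · have h := Real.tendsto_pow_log_div_mul_add_atTop 1 0 3 one_ne_zero
    have h2 := h.eventually_lt_const (div_pos hd hc)
    filter_upwards [h2, eventually_gt_atTop (0:ℝ)] with x hx hx0
    simp only [one_mul, add_zero] at hx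
    rw [div_lt_iff₀ hx0] at hx
    have h3 := mul_lt_mul_of_pos_left hx hc
    have h4 : c * (d / c * x) = d * x := by field_simp
    linarith
  
lemma logdiff_le {a b : ℝ} (ha : 0 < a) (hab : a ≤ b) :
    Real.log b - Real.log a ≤ (b - a) / a := by
  have hb : 0 < b := lt_of_lt_of_le ha hab
  rw [← Real.log_div hb.ne' ha.ne']
  have := Real.log_le_sub_one_of_pos (div_pos hb ha)
  rwa [div_sub_one ha.ne'] at this

lemma logdiff_ge {a b : ℝ} (ha : 0 < a) (hab : a ≤ b) :
    (b - a) / b ≤ Real.log b - Real.log a := by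
  have hb : 0 < b := lt_of_lt_of_le ha hab
  have h := Real.log_le_sub_one_of_pos (div_pos ha hb)
  rw [Real.log_div ha.ne' hb.ne', div_sub_one hb.ne'] at h
  have : (a - b) / b = -((b - a) / b) := by ring
  linarith

lemma ineq3aux (l₁ l₂ β₁ β₂ α₂ x L M K : ℝ)
    (hl₁ : 0 < l₁) (hl₂ : 0 < l₂) (hβ₁ : 0 ≤ β₁) (hβ₂ : 0 < β₂) (hα₂ : 0 ≤ α₂)
    (hL : 1 ≤ L) (hK : 1 ≤ K) (hLM : L ≤ M)
    (hx : 0 < x) (c4 : (2*β₁+l₂+2*α₂)*L^3 ≤ β₂*x) :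
    l₁ * (1/M - 1/L) + 2*β₁ * (1/K - 1/L) + (l₂+2*α₂) * (1 - 1/L)
      + β₂ * x * ((1/L - 1/L^3) - 1/L) ≤ 0 := by
  have hL0 : 0 < L := by linarith
  have hM0 : 0 < M := by linarith
  have hK0 : 0 < K := by linarith
  have t1 : 1/M - 1/L ≤ 0 := by
    have := one_div_le_one_div_of_le hL0 hLM; linarith
  have e1 : l₁ * (1/M - 1/L) ≤ 0 := mul_nonpos_of_nonneg_of_nonpos hl₁.le t1
  have t2 : 1/K - 1/L ≤ 1 := by
    have h1 : 1/K ≤ 1 := by rw [div_le_one hK0]; linarith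
    have h2 : 0 < 1/L := by positivity
    linarith
  have e2 : 2*β₁*(1/K - 1/L) ≤ 2*β₁*1 :=
    mul_le_mul_of_nonneg_left t2 (by linarith)
  have t3 : 1 - 1/L ≤ 1 := by
    have : 0 < 1/L := by positivity
    linarith
  have e3 : (l₂+2*α₂)*(1-1/L) ≤ (l₂+2*α₂)*1 :=
    mul_le_mul_of_nonneg_left t3 (by linarith)
  have e4 : β₂ * x * ((1/L - 1/L^3) - 1/L) = -(β₂*x/L^3) := by
    field_simp
    ring
  have main : 2*β₁ + (l₂+2*α₂) ≤ β₂*x/L^3 := by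
    rw [le_div_iff₀ (by positivity)]
    nlinarith
  linarith [e1, e2, e3, main, e4.le, e4.ge]


lemma ineq2aux (l₁ l₂ β₁ β₂ α₂ x L M K : ℝ)
    (hl₁ : 0 < l₁) (hl₂ : 0 < l₂) (hβ₁ : 0 ≤ β₁) (hβ₂ : 0 < β₂) (hα₂ : 0 ≤ α₂)
    (hL : 1 ≤ L) (hK : 1 ≤ K) (hKL : K ≤ L) (hLM : L ≤ M)
    (hx : 0 < x) (hLK : L - K ≤ 2/x) (c5 : L^2 ≤ x)
    (c6 : (l₁+2*β₁+l₂+α₂+β₂)*l₂ ≤ β₂*l₁*L) :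
    l₁ * ((1/M - 1/M^3) - (1/L - 1/L^3)) + β₁ * ((1/K - 1/K^3) - (1/L - 1/L^3))
      + (l₂+α₂) * (1/L - (1/L - 1/L^3))
      + β₂ * x * ((1/L - 1/L^3 - (l₁/l₂)/(x*L^2) + 1/(x*L^3)) - (1/L - 1/L^3)) ≤ 0 := by
  have hL0 : 0 < L := by linarith
  have hM0 : 0 < M := by linarith
  have hK0 : 0 < K := by linarith
  -- term A
  have a1 : (1/M - 1/M^3) - (1/L - 1/L^3) ≤ 1/L^3 := by
    have h1 : 1/M ≤ 1/L := one_div_le_one_div_of_le hL0 hLM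
    have h2 : 0 ≤ 1/M^3 := by positivity
    linarith
  -- term B
  have hxLK : (L - K) * x ≤ 2 := by
    rw [← le_div_iff₀ hx]; exact hLK
  have b1 : 1/K - 1/L ≤ 2/L^3 := by
    rw [div_sub_div _ _ hK0.ne' hL0.ne', div_le_div_iff₀ (by positivity) (by positivity)]
    -- (1*L - K*1) * L^3 ≤ 2 * (K*L)
    nlinarith [mul_le_mul_of_nonneg_right hxLK (by positivity : (0:ℝ) ≤ L^3),
      mul_le_mul_of_nonneg_right c5 (by positivity : (0:ℝ) ≤ 2*L),
      mul_pos hx hL0, mul_le_mul_of_nonneg_left hK (by positivity : (0:ℝ) ≤ 2*L*x)]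
  have b2 : 1/L^3 ≤ 1/K^3 := by
    apply one_div_le_one_div_of_le (by positivity)
    exact pow_le_pow_left₀ hK0.le hKL 3
  have a2 : (1/K - 1/K^3) - (1/L - 1/L^3) ≤ 2*(1/L^3) := by
    have : 2/L^3 = 2*(1/L^3) := by ring
    linarith
  have a1' : (1/M - 1/M^3) - (1/L - 1/L^3) ≤ 1*(1/L^3) := by linarith
  -- rewrite fourth term
  have heq : β₂ * x * ((1/L - 1/L^3 - (l₁/l₂)/(x*L^2) + 1/(x*L^3)) - (1/L - 1/L^3))
      = -(β₂*l₁/l₂*(1/L^2)) + β₂*(1/L^3) := by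
    field_simp
    ring
  have e1 : l₁ * ((1/M - 1/M^3) - (1/L - 1/L^3)) ≤ l₁ * (1*(1/L^3)) :=
    mul_le_mul_of_nonneg_left a1' hl₁.le
  have e2 : β₁ * ((1/K - 1/K^3) - (1/L - 1/L^3)) ≤ β₁ * (2*(1/L^3)) :=
    mul_le_mul_of_nonneg_left a2 hβ₁
  have e3 : (l₂+α₂) * (1/L - (1/L - 1/L^3)) = (l₂+α₂) * (1/L^3) := by ring
  -- main comparison
  have main : (l₁+2*β₁+l₂+α₂+β₂)*(1/L^3) ≤ β₂*l₁/l₂*(1/L^2) := by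
    rw [mul_one_div, mul_one_div, div_le_div_iff₀ (by positivity) (by positivity)]
    have h := mul_le_mul_of_nonneg_right c6 (by positivity : (0:ℝ) ≤ L^2)
    have hl₂' : (0:ℝ) < l₂ := hl₂
    rw [div_mul_eq_mul_div, le_div_iff₀ hl₂']
    nlinarith [h]
  linarith [e1, e2, main, heq.le, heq.ge, e3.le, e3.ge]


set_option maxHeartbeats 1000000 in
lemma ineq1aux (l₁ l₂ x L M : ℝ)
    (hl₁ : 0 < l₁) (hl₂ : 0 < l₂)
    (hL : 1 ≤ L) (hLM : L ≤ M) (hx : 0 < x)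
    (hML : M - L ≤ 1/x) (hML2 : 1/(x+1) ≤ M - L)
    (c7 : 6*l₁ ≤ l₂*L) (c8 : (4*l₁+6*l₁^2/l₂)*L ≤ l₂*x) :
    l₁ * ((1/M - 1/M^3 - (l₁/l₂)/((x+1)*M^2) + 1/((x+1)*M^3))
          - (1/L - 1/L^3 - (l₁/l₂)/(x*L^2) + 1/(x*L^3)))
      + l₂ * ((1/L - 1/L^3) - (1/L - 1/L^3 - (l₁/l₂)/(x*L^2) + 1/(x*L^3))) ≤ 0 := by
  have hL0 : 0 < L := by linarith
  have hM0 : 0 < M := by linarith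
  have hM1 : 1 ≤ M := le_trans hL hLM
  have hx1 : (0:ℝ) < x + 1 := by linarith
  have hMLnn : 0 ≤ M - L := by linarith
  have hxML : (M - L) * x ≤ 1 := by rw [← le_div_iff₀ hx]; exact hML
  -- part 2 of A bound : 1/L^3 - 1/M^3 ≤ 3/(x L^4)
  have k1 : (M^3 - L^3) * x ≤ 3 * M^2 := by
    have h_a : 0 ≤ x * ((M-L)*(M-L)*(2*M+L)) :=
      mul_nonneg hx.le (mul_nonneg (mul_nonneg hMLnn hMLnn) (by linarith))
    have h_b : (M-L)*x*(3*M^2) ≤ 1*(3*M^2) :=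
      mul_le_mul_of_nonneg_right hxML (by positivity)
    linarith [h_a, h_b]
  have p2 : 1/L^3 - 1/M^3 ≤ 3*(1/(x*L^4)) := by
    have e : 1/L^3 - 1/M^3 = (M^3 - L^3)/(L^3*M^3) := by
      field_simp
    rw [e, mul_one_div, div_le_div_iff₀ (by positivity) (by positivity)]
    have h1 := mul_le_mul_of_nonneg_right k1 (by positivity : (0:ℝ) ≤ L^4)
    have h2 := mul_le_mul_of_nonneg_left hLM (by positivity : (0:ℝ) ≤ 3*M^2*L^3)
    linarith [h1, h2]
  -- part 1 of A bound
  have p1 : 1/M - 1/L ≤ -(1/(x+1)/(L*M)) := by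
    have e : 1/M - 1/L = -((M-L)/(L*M)) := by
      rw [div_sub_div _ _ hM0.ne' hL0.ne',
        show (1*L - M*1) = -(M-L) by ring, mul_comm M L, neg_div]
    have h : 1/(x+1)/(L*M) ≤ (M-L)/(L*M) := by gcongr
    linarith [e.le, e.ge, h]
  have bA : (1/M - 1/M^3) - (1/L - 1/L^3) ≤ -(1/(x+1)/(L*M)) + 3*(1/(x*L^4)) := by
    linarith [p1, p2]
  -- B bound
  have bB : 1/(x*L^2) - 1/((x+1)*M^2) ≤ 3*(1/(x^2*L^2)) := by
    have e : 1/(x*L^2) - 1/((x+1)*M^2)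
        = ((x+1)*M^2 - x*L^2)/((x*L^2)*((x+1)*M^2)) := by
      rw [div_sub_div _ _ (by positivity : x*L^2 ≠ 0) (by positivity : (x+1)*M^2 ≠ 0)]
      ring_nf
    have claim : (x+1)*M^2 - x*L^2 ≤ 3*M^2 := by
      have h1 : (M-L)*x*(M+L) ≤ 1*(M+L) :=
        mul_le_mul_of_nonneg_right hxML (by linarith)
      have h2 : M*1 ≤ M*M := mul_le_mul_of_nonneg_left hM1 hM0.le
      linarith [h1, h2]
    rw [e, mul_one_div, div_le_div_iff₀ (by positivity) (by positivity)]
    have h2 := mul_le_mul_of_nonneg_right claim (by positivity : (0:ℝ) ≤ x^2*L^2)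
    have h4 : (0:ℝ) ≤ 3*M^2*L^2*x := by positivity
    linarith [h2, h4]
  -- C bound
  have bC : 1/((x+1)*M^3) - 1/(x*L^3) ≤ 0 := by
    have h : 1/((x+1)*M^3) ≤ 1/(x*L^3) := by
      apply one_div_le_one_div_of_le (by positivity)
      have h5 := pow_le_pow_left₀ hL0.le hLM 3
      have h6 : 0 < M^3 := pow_pos hM0 3
      nlinarith [h5, h6]
    linarith
  -- combine leading terms
  have comb : 1/(x*L^2) - 1/(x+1)/(L*M) ≤ 2*(1/(x^2*L^2)) := by
    have e : 1/(x*L^2) - 1/(x+1)/(L*M)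
        = ((x+1)*(L*M) - x*L^2)/((x*L^2)*((x+1)*(L*M))) := by field_simp
    have claim2 : (x+1)*(L*M) - x*L^2 ≤ 2*(L*M) := by
      have h1 : (M-L)*x*L ≤ 1*L := mul_le_mul_of_nonneg_right hxML hL0.le
      have h2 : L*1 ≤ L*M := mul_le_mul_of_nonneg_left hM1 hL0.le
      linarith [h1, h2]
    rw [e, mul_one_div, div_le_div_iff₀ (by positivity) (by positivity)]
    have h2 := mul_le_mul_of_nonneg_right claim2 (by positivity : (0:ℝ) ≤ x^2*L^2)
    have h3 : (0:ℝ) ≤ 2*x*L^3*M := by positivity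
    linarith [h2, h3]
  -- final small bounds
  have f1 : 3*l₁*(1/(x*L^4)) ≤ l₂/2*(1/(x*L^3)) := by
    rw [mul_one_div, mul_one_div, div_le_div_iff₀ (by positivity) (by positivity)]
    have h := mul_le_mul_of_nonneg_right c7 (by positivity : (0:ℝ) ≤ x*L^3)
    linarith [h]
  have f2 : l₁*(2*(1/(x^2*L^2))) + (l₁^2/l₂)*(3*(1/(x^2*L^2))) ≤ l₂/2*(1/(x*L^3)) := by
    have e : l₁*(2*(1/(x^2*L^2))) + (l₁^2/l₂)*(3*(1/(x^2*L^2)))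
        = (2*l₁+3*l₁^2/l₂)/(x^2*L^2) := by ring
    rw [e, mul_one_div, div_le_div_iff₀ (by positivity) (by positivity),
      ← mul_le_mul_iff_of_pos_right hl₂]
    have h := mul_le_mul_of_nonneg_right
      (mul_le_mul_of_nonneg_right c8 (by positivity : (0:ℝ) ≤ x*L^2)) hl₂.le
    have e3 : (2*l₁+3*l₁^2/l₂)*(x*L^3)*l₂ = (2*l₁*l₂+3*l₁^2)*(x*L^3) := by
      field_simp <;> ring
    have e4 : (4*l₁+6*l₁^2/l₂)*L*(x*L^2)*l₂ = (4*l₁*l₂+6*l₁^2)*(x*L^3) := by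
      field_simp <;> ring
    rw [e4] at h
    rw [e3]
    linarith [h]
  -- main identity
  have heq : l₁ * ((1/M - 1/M^3 - (l₁/l₂)/((x+1)*M^2) + 1/((x+1)*M^3))
          - (1/L - 1/L^3 - (l₁/l₂)/(x*L^2) + 1/(x*L^3)))
      + l₂ * ((1/L - 1/L^3) - (1/L - 1/L^3 - (l₁/l₂)/(x*L^2) + 1/(x*L^3)))
      = l₁ * ((1/M - 1/M^3) - (1/L - 1/L^3))
        + (l₁^2/l₂) * (1/(x*L^2) - 1/((x+1)*M^2))
        + l₁ * (1/((x+1)*M^3) - 1/(x*L^3))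
        + (l₁*(1/(x*L^2)) - l₂*(1/(x*L^3))) := by
    field_simp
    ring
  have hA' : l₁ * ((1/M - 1/M^3) - (1/L - 1/L^3))
      ≤ l₁ * (-(1/(x+1)/(L*M)) + 3*(1/(x*L^4))) := mul_le_mul_of_nonneg_left bA hl₁.le
  have hB' : (l₁^2/l₂) * (1/(x*L^2) - 1/((x+1)*M^2))
      ≤ (l₁^2/l₂) * (3*(1/(x^2*L^2))) := mul_le_mul_of_nonneg_left bB (by positivity)
  have hC' : l₁ * (1/((x+1)*M^3) - 1/(x*L^3)) ≤ 0 :=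
    mul_nonpos_of_nonneg_of_nonpos hl₁.le bC
  have comb' : l₁ * (1/(x*L^2) - 1/(x+1)/(L*M)) ≤ l₁ * (2*(1/(x^2*L^2))) :=
    mul_le_mul_of_nonneg_left comb hl₁.le
  linarith [heq.le, hA', hB', hC', comb', f1, f2]

/-- Supermartingale inequalities for the logarithmic Lyapunov function
in the case `α₁ = 0`. For `x > 1` let
`g(x,0) = 1/ln x − 1/(ln x)³ − (λ₁/λ₂)/(x(ln x)²) + 1/(x(ln x)³)`,
`g(x,1) = 1/ln x − 1/(ln x)³`, `g(x,2) = 1/ln x`, `g(x,3) = 1`. If `λ₁, λ₂ > 0`,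
`β₁ ≥ 0`, `β₂ > 0`, `α₂ ≥ 0`, then there exists `N > 1` such that for every real `x ≥ N`
the three generator inequalities (i)–(iii) hold. -/
theorem stmt_18
    (l₁ l₂ β₁ β₂ α₂ : ℝ)
    (hl₁ : 0 < l₁) (hl₂ : 0 < l₂) (hβ₁ : 0 ≤ β₁) (hβ₂ : 0 < β₂) (hα₂ : 0 ≤ α₂)
    (g : ℝ → ℕ → ℝ)
    (hg0 : ∀ x : ℝ, 1 < x → g x 0 =
      1 / Real.log x - 1 / (Real.log x) ^ 3 - (l₁ / l₂) / (x * (Real.log x) ^ 2) +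
        1 / (x * (Real.log x) ^ 3))
    (hg1 : ∀ x : ℝ, 1 < x → g x 1 = 1 / Real.log x - 1 / (Real.log x) ^ 3)
    (hg2 : ∀ x : ℝ, 1 < x → g x 2 = 1 / Real.log x)
    (hg3 : ∀ x : ℝ, 1 < x → g x 3 = 1) :
    ∃ N : ℝ, 1 < N ∧ ∀ x : ℝ, N ≤ x →
      (l₁ * (g (x + 1) 0 - g x 0) + l₂ * (g x 1 - g x 0) ≤ 0) ∧
      (l₁ * (g (x + 1) 1 - g x 1) + β₁ * (g (x - 1) 1 - g x 1) +
        (l₂ + α₂) * (g x 2 - g x 1) + β₂ * x * (g x 0 - g x 1) ≤ 0) ∧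
      (l₁ * (g (x + 1) 2 - g x 2) + 2 * β₁ * (g (x - 1) 2 - g x 2) +
        (l₂ + 2 * α₂) * (g x 3 - g x 2) + β₂ * x * (g x 1 - g x 2) ≤ 0) := by
  have evA : ∀ᶠ x : ℝ in atTop, (4:ℝ) ≤ x := eventually_ge_atTop 4
  have evB : ∀ᶠ x : ℝ in atTop, 1 ≤ Real.log x :=
    Real.tendsto_log_atTop.eventually_ge_atTop 1
  have hsub : Tendsto (fun x : ℝ => x - 1) atTop atTop := by
    simpa [sub_eq_add_neg] using tendsto_atTop_add_const_right atTop (-1 : ℝ) tendsto_id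
  have evC : ∀ᶠ x : ℝ in atTop, 1 ≤ Real.log (x - 1) :=
    (Real.tendsto_log_atTop.comp hsub).eventually_ge_atTop 1
  have evD := master18 (2*β₁+l₂+2*α₂) β₂ hβ₂
  have evE := master18 1 1 one_pos
  have evF : ∀ᶠ x : ℝ in atTop, (l₁+2*β₁+l₂+α₂+β₂)*l₂ ≤ β₂*l₁*Real.log x := by
    have hb : 0 < β₂*l₁ := mul_pos hβ₂ hl₁
    filter_upwards [Real.tendsto_log_atTop.eventually_ge_atTop
      ((l₁+2*β₁+l₂+α₂+β₂)*l₂/(β₂*l₁))] with x hx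
    rw [div_le_iff₀ hb] at hx
    linarith [hx]
  have evG : ∀ᶠ x : ℝ in atTop, 6*l₁ ≤ l₂*Real.log x := by
    filter_upwards [Real.tendsto_log_atTop.eventually_ge_atTop (6*l₁/l₂)] with x hx
    rw [div_le_iff₀ hl₂] at hx
    linarith [hx]
  have evH := master18 (4*l₁+6*l₁^2/l₂) l₂ hl₂
  obtain ⟨a, ha⟩ := eventually_atTop.mp
    (evA.and (evB.and (evC.and (evD.and (evE.and (evF.and (evG.and evH)))))))
  refine ⟨max a 2, lt_of_lt_of_le one_lt_two (le_max_right a 2), fun x hx => ?_⟩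
  obtain ⟨h1, h2, h3, h4, h5, h6, h7, h8⟩ := ha x (le_trans (le_max_left a 2) hx)
  have hx0 : (0:ℝ) < x := by linarith
  have hgt : (1:ℝ) < x := by linarith
  have hgt1 : (1:ℝ) < x + 1 := by linarith
  have hgt2 : (1:ℝ) < x - 1 := by linarith
  have hL : 1 ≤ Real.log x := h2
  have hK : 1 ≤ Real.log (x-1) := h3
  have hL0 : 0 < Real.log x := by linarith
  have hLM : Real.log x ≤ Real.log (x+1) := Real.log_le_log hx0 (by linarith)
  have hKL : Real.log (x-1) ≤ Real.log x := Real.log_le_log (by linarith) (by linarith)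
  have hML : Real.log (x+1) - Real.log x ≤ 1/x := by
    have h := logdiff_le hx0 (by linarith : x ≤ x+1)
    have e : (x+1-x)/x = 1/x := by ring
    linarith [h, e.le, e.ge]
  have hML2 : 1/(x+1) ≤ Real.log (x+1) - Real.log x := by
    have h := logdiff_ge hx0 (by linarith : x ≤ x+1)
    have e : (x+1-x)/(x+1) = 1/(x+1) := by ring
    linarith [h, e.le, e.ge]
  have hLK : Real.log x - Real.log (x-1) ≤ 2/x := by
    have h := logdiff_le (by linarith : (0:ℝ) < x-1) (by linarith : x-1 ≤ x)
    have e : (x-(x-1))/(x-1) = 1/(x-1) := by ring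
    have h2' : 1/(x-1) ≤ 2/x := by
      rw [div_le_div_iff₀ (by linarith) hx0]; linarith
    linarith [h, e.le, e.ge, h2']
  have hL3 : Real.log x ≤ (Real.log x)^3 := by
    have h9 := mul_nonneg (mul_nonneg hL0.le (by linarith : 0 ≤ Real.log x - 1))
      (by linarith : (0:ℝ) ≤ Real.log x + 1)
    nlinarith [h9]
  have c5 : (Real.log x)^2 ≤ x := by
    simp only [one_mul] at h5
    nlinarith [h5, hL, hL0]
  have c8 : (4*l₁+6*l₁^2/l₂)*Real.log x ≤ l₂*x := by
    have hc : 0 ≤ 4*l₁+6*l₁^2/l₂ := by positivity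
    have := mul_le_mul_of_nonneg_left hL3 hc
    linarith [h8, this]
  refine ⟨?_, ?_, ?_⟩
  · rw [hg0 (x+1) hgt1, hg0 x hgt, hg1 x hgt]
    exact ineq1aux l₁ l₂ x (Real.log x) (Real.log (x+1)) hl₁ hl₂ hL hLM hx0 hML hML2 h7 c8
  · rw [hg1 (x+1) hgt1, hg1 (x-1) hgt2, hg1 x hgt, hg2 x hgt, hg0 x hgt]
    exact ineq2aux l₁ l₂ β₁ β₂ α₂ x (Real.log x) (Real.log (x+1)) (Real.log (x-1))
      hl₁ hl₂ hβ₁ hβ₂ hα₂ hL hK hKL hLM hx0 hLK c5 h6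
  · rw [hg2 (x+1) hgt1, hg2 (x-1) hgt2, hg2 x hgt, hg3 x hgt, hg1 x hgt]
    exact ineq3aux l₁ l₂ β₁ β₂ α₂ x (Real.log x) (Real.log (x+1)) (Real.log (x-1))
      hl₁ hl₂ hβ₁ hβ₂ hα₂ hL hK hLM hx0 h4
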